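/- With the edge labeling of B_n(q) by rightmost-nonzero-coordinate indices, for every σ ∈ S_n the number of maximal chains of B_n(q) (from 0 to F_q^n) whose label sequence is σ(1), σ(2), ..., σ(n) equals q^{inv(σ)}. -/

import Mathlib

/-- `i` is the index of the rightmost nonzero coordinate of the vector `x`. -/
def RightmostIdx {F : Type*} [Field F] {n : ℕ} (x : Fin n → F) (i : Fin n) : Prop :=
  x i ≠ 0 ∧ ∀ j : Fin n, i < j → x j = 0

/-- `f(A(X))`: the set of indices arising as the rightmost nonzero coordinate of some
nonzero vector of the subspace `X` (equivalently, of a basis vector of a line in `X`). -/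
def fSet {F : Type*} [Field F] {n : ℕ} (X : Submodule F (Fin n → F)) : Set (Fin n) :=
  {i | ∃ x ∈ X, RightmostIdx x i}

/-- The number of inversions of a permutation. -/
def inversions {n : ℕ} (σ : Equiv.Perm (Fin n)) : ℕ :=
  (Finset.univ.filter (fun p : Fin n × Fin n => p.1 < p.2 ∧ σ p.2 < σ p.1)).card

section Aux
variable {F : Type*} [Field F] {n : ℕ}

lemma rightmostIdx_unique {x : Fin n → F} {i j : Fin n}
    (hi : RightmostIdx x i) (hj : RightmostIdx x j) : i = j := by
  rcases lt_trichotomy i j with h | h | h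
  · exact absurd (hi.2 j h) hj.1
  · exact h
  · exact absurd (hj.2 i h) hi.1

lemma exists_rightmostIdx {x : Fin n → F} (hx : x ≠ 0) : ∃ i, RightmostIdx x i := by
  classical
  have hne : (Finset.univ.filter (fun i => x i ≠ 0)).Nonempty := by
    obtain ⟨i, hi⟩ := Function.ne_iff.mp hx
    exact ⟨i, by simpa using hi⟩
  refine ⟨(Finset.univ.filter (fun i => x i ≠ 0)).max' hne, ?_, ?_⟩
  · have := (Finset.univ.filter (fun i => x i ≠ 0)).max'_mem hne
    simpa using this
  · intro j hj
    by_contra hxj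
    exact absurd (Finset.le_max' _ j (by simpa using hxj)) (not_le.mpr hj)

/-- Master lemma: a nontrivial combination of vectors with distinct rightmost indices
has a rightmost index, namely the maximum of the participating ones. -/
lemma master {ι : Type*} (v : ι → Fin n → F) (r : ι → Fin n)
    (hr : ∀ i, RightmostIdx (v i) (r i)) (hinj : Function.Injective r)
    (a : ι →₀ F) (ha : a ≠ 0) :
    ∃ i ∈ a.support, RightmostIdx (Finsupp.linearCombination F v a) (r i) := by
  classical
  have hne : a.support.Nonempty := Finsupp.support_nonempty_iff.mpr ha
  obtain ⟨i0, hi0, hmax⟩ := a.support.exists_max_image (fun i => r i) hne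
  have hx : ∀ j, Finsupp.linearCombination F v a j = ∑ i ∈ a.support, a i * v i j := by
    intro j
    rw [Finsupp.linearCombination_apply, Finsupp.sum, Finset.sum_apply]
    simp
  refine ⟨i0, hi0, ?_, ?_⟩
  · rw [hx, Finset.sum_eq_single i0]
    · exact mul_ne_zero (Finsupp.mem_support_iff.1 hi0) (hr i0).1
    · intro b hb hbne
      have : r b < r i0 := lt_of_le_of_ne (hmax b hb) (fun h => hbne (hinj h))
      rw [(hr b).2 _ this, mul_zero]
    · intro h; exact absurd hi0 h
  · intro j hj
    rw [hx]
    refine Finset.sum_eq_zero fun b hb => ?_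
    rw [(hr b).2 _ (lt_of_le_of_lt (hmax b hb) hj), mul_zero]

lemma fSet_mono {X Y : Submodule F (Fin n → F)} (h : X ≤ Y) : fSet X ⊆ fSet Y :=
  fun _ ⟨x, hx, hr⟩ => ⟨x, h hx, hr⟩

lemma ncard_fSet_le (X : Submodule F (Fin n → F)) :
    (fSet X).ncard ≤ Module.finrank F X := by
  classical
  have hch : ∀ i : fSet X, ∃ x, x ∈ X ∧ RightmostIdx x (i : Fin n) := fun i => i.2
  choose v hvX hvr using hch
  haveI : Fintype ↥(fSet X) := Fintype.ofFinite _
  have hli : LinearIndependent F v := by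
    rw [linearIndependent_iff]
    intro a ha0
    by_contra hne
    obtain ⟨i, _, hri⟩ := master v (fun i => (i : Fin n)) hvr Subtype.val_injective a hne
    rw [ha0] at hri
    exact hri.1 rfl
  calc (fSet X).ncard = Fintype.card ↥(fSet X) := by
        rw [Set.ncard_eq_toFinset_card', Set.toFinset_card]
    _ = Module.finrank F (Submodule.span F (Set.range v)) := (finrank_span_eq_card hli).symm
    _ ≤ Module.finrank F X := by
        apply Submodule.finrank_mono
        rw [Submodule.span_le]
        rintro _ ⟨i, rfl⟩
        exact hvX i

end Aux

section Mat
variable {F : Type*} [Field F] {n : ℕ} (σ : Equiv.Perm (Fin n))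

/-- A matrix in "σ-echelon" form. -/
def GoodMat (M : Fin n → Fin n → F) : Prop :=
  (∀ k, M k (σ k) = 1) ∧ (∀ k j, σ k < j → M k j = 0) ∧ (∀ l k, l < k → M k (σ l) = 0)

variable {σ} {M : Fin n → Fin n → F}

lemma GoodMat.ridx (h : GoodMat σ M) (k : Fin n) : RightmostIdx (M k) (σ k) :=
  ⟨by rw [h.1 k]; exact one_ne_zero, h.2.1 k⟩

lemma GoodMat.indep (h : GoodMat σ M) : LinearIndependent F M := by
  rw [linearIndependent_iff]
  intro a ha0
  by_contra hne
  obtain ⟨i, _, hri⟩ := master M σ h.ridx σ.injective a hne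
  rw [ha0] at hri
  exact hri.1 rfl

lemma GoodMat.ridx_span (h : GoodMat σ M) {s : Set (Fin n)} {x : Fin n → F}
    (hx : x ∈ Submodule.span F (M '' s)) {i : Fin n} (hri : RightmostIdx x i) :
    ∃ l ∈ s, i = σ l := by
  rw [Finsupp.mem_span_image_iff_linearCombination] at hx
  obtain ⟨a, has, rfl⟩ := hx
  have ha : a ≠ 0 := by
    rintro rfl
    rw [map_zero] at hri
    exact hri.1 rfl
  obtain ⟨l, hl, hrl⟩ := master M σ h.ridx σ.injective a ha
  exact ⟨l, has hl, rightmostIdx_unique hri hrl⟩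

/-- The spans of initial segments of the rows of `M`. -/
def cOf (M : Fin n → Fin n → F) : Fin (n + 1) → Submodule F (Fin n → F) :=
  fun k => Submodule.span F (M '' {l : Fin n | (l : ℕ) < (k : ℕ)})

def eqvLt {n m : ℕ} (h : m ≤ n) : {l : Fin n | (l : ℕ) < m} ≃ Fin m where
  toFun l := ⟨l.1, l.2⟩
  invFun j := ⟨⟨j.1, lt_of_lt_of_le j.2 h⟩, j.2⟩
  left_inv _ := rfl
  right_inv _ := rfl

lemma finrank_cOf (h : GoodMat σ M) (k : Fin (n + 1)) :
    Module.finrank F (cOf M k) = (k : ℕ) := by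
  classical
  rw [cOf, Set.image_eq_range]
  have hli : LinearIndependent F (fun x : {l : Fin n | (l : ℕ) < (k : ℕ)} => M (↑x)) :=
    h.indep.comp _ Subtype.val_injective
  rw [finrank_span_eq_card hli,
    Fintype.card_congr (eqvLt (Nat.lt_succ_iff.mp k.isLt)), Fintype.card_fin]

lemma mem_cOf {k : Fin (n+1)} {l : Fin n} (hl : (l : ℕ) < (k : ℕ)) : M l ∈ cOf M k :=
  Submodule.subset_span ⟨l, hl, rfl⟩

lemma cOf_zero : cOf M 0 = ⊥ := by
  have he : {l : Fin n | (l : ℕ) < ((0 : Fin (n+1)) : ℕ)} = ∅ := by ext; simp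
  rw [cOf, he]
  simp

lemma cOf_last (h : GoodMat σ M) : cOf M (Fin.last n) = ⊤ := by
  apply Submodule.eq_top_of_finrank_eq
  rw [finrank_cOf h, Fin.val_last, Module.finrank_fin_fun]

lemma cOf_mono {k k' : Fin (n+1)} (hk : k ≤ k') : cOf M k ≤ cOf M k' :=
  Submodule.span_mono (Set.image_mono fun l hl => show (l:ℕ) < (k':ℕ) from lt_of_lt_of_le hl hk)

lemma not_mem_fSet_cOf (h : GoodMat σ M) {k : Fin (n+1)} {i : Fin n}
    (hik : ¬ ((i : ℕ) < (k : ℕ))) : σ i ∉ fSet (cOf M k) := by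
  rintro ⟨x, hx, hr⟩
  obtain ⟨l, hl, hil⟩ := h.ridx_span hx hr
  exact hik (σ.injective hil ▸ hl)

lemma mem_fSet_cOf_succ (h : GoodMat σ M) (i : Fin n) : σ i ∈ fSet (cOf M i.succ) :=
  ⟨M i, mem_cOf (by simp), h.ridx i⟩

lemma cOf_lt (h : GoodMat σ M) (i : Fin n) : cOf M i.castSucc < cOf M i.succ := by
  refine lt_of_le_of_ne (cOf_mono (by simp [Fin.le_def])) fun he => ?_
  have hm : M i ∈ cOf M i.castSucc := he ▸ mem_cOf (by simp)
  exact not_mem_fSet_cOf h (by simp) ⟨M i, hm, h.ridx i⟩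

lemma cOf_chain (h : GoodMat σ M) :
    cOf M 0 = ⊥ ∧ cOf M (Fin.last n) = ⊤ ∧
    ∀ i : Fin n, cOf M i.castSucc < cOf M i.succ ∧
      Module.finrank F (cOf M i.succ) = Module.finrank F (cOf M i.castSucc) + 1 ∧
      σ i ∈ fSet (cOf M i.succ) ∧ σ i ∉ fSet (cOf M i.castSucc) := by
  refine ⟨cOf_zero, cOf_last h, fun i => ⟨cOf_lt h i, ?_, mem_fSet_cOf_succ h i,
    not_mem_fSet_cOf h (by simp)⟩⟩
  rw [finrank_cOf h, finrank_cOf h, Fin.val_succ, Fin.coe_castSucc]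

lemma cOf_injective {M' : Fin n → Fin n → F} (h : GoodMat σ M) (h' : GoodMat σ M')
    (hc : cOf M = cOf M') : M = M' := by
  funext k
  by_contra hne
  have hd0 : M k - M' k ≠ 0 := sub_ne_zero.mpr (Function.ne_iff.mpr ?_ )
  · obtain ⟨i, hri⟩ := exists_rightmostIdx hd0
    have hmem : M k - M' k ∈ cOf M' k.succ := by
      refine Submodule.sub_mem _ ?_ (mem_cOf (by simp))
      rw [← hc]; exact mem_cOf (by simp)
    obtain ⟨l, hl, rfl⟩ := h'.ridx_span hmem hri
    have hlk : l ≤ k := by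
      simp only [Set.mem_setOf_eq, Fin.val_succ, Nat.lt_succ_iff] at hl
      exact hl
    rcases lt_or_eq_of_le hlk with hlt | rfl
    · exact hri.1 (by simp [Pi.sub_apply, h.2.2 l k hlt, h'.2.2 l k hlt])
    · exact hri.1 (by simp [Pi.sub_apply, h.1 l, h'.1 l])
  · exact Function.ne_iff.mp hne

end Mat

section Surj
variable {F : Type*} [Field F] {n : ℕ} {σ : Equiv.Perm (Fin n)}
  {c : Fin (n + 1) → Submodule F (Fin n → F)}

variable (hstep : ∀ i : Fin n, c i.castSucc < c i.succ ∧
    Module.finrank F (c i.succ) = Module.finrank F (c i.castSucc) + 1 ∧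
    σ i ∈ fSet (c i.succ) ∧ σ i ∉ fSet (c i.castSucc))

include hstep

lemma c_mono : Monotone c :=
  (Fin.strictMono_iff_lt_succ.mpr fun i => (hstep i).1).monotone

lemma finrank_c (hc : c 0 = ⊥) (k : Fin (n + 1)) : Module.finrank F (c k) = (k : ℕ) := by
  induction k using Fin.induction with
  | zero => rw [hc]; simp
  | succ i ih => rw [(hstep i).2.1, ih]; simp

lemma fSet_c_succ (hc : c 0 = ⊥) (k : Fin n) :
    fSet (c k.succ) = σ '' Set.Iic k := by
  have hsub : σ '' Set.Iic k ⊆ fSet (c k.succ) := by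
    rintro _ ⟨l, hl, rfl⟩
    exact fSet_mono (c_mono hstep (Fin.succ_le_succ_iff.mpr hl)) (hstep l).2.2.1
  refine (Set.eq_of_subset_of_ncard_le hsub ?_ (Set.toFinite _)).symm
  have h1 : (σ '' Set.Iic k).ncard = (k : ℕ) + 1 := by
    rw [Set.ncard_image_of_injective _ σ.injective, ← Finset.coe_Iic,
      Set.ncard_coe_finset, Fin.card_Iic]
  rw [h1]
  have := ncard_fSet_le (c k.succ)
  rwa [finrank_c hstep hc, Fin.val_succ] at this

lemma exists_row (hc : c 0 = ⊥) (k : Fin n) :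
    ∃ v : Fin n → F, v ∈ c k.succ ∧ v (σ k) = 1 ∧
      (∀ j, σ k < j → v j = 0) ∧ ∀ l, l < k → v (σ l) = 0 := by
  classical
  set emb : Fin ((k : ℕ) + 1) → Fin n := fun m => ⟨m.1, lt_of_lt_of_le m.2 k.isLt⟩ with hemb
  set ψ : ↥(c k.succ) →ₗ[F] (Fin ((k : ℕ) + 1) → F) :=
    LinearMap.pi (fun m => (LinearMap.proj (σ (emb m))).comp (c k.succ).subtype) with hψ
  have hker : ∀ v : ↥(c k.succ), ψ v = 0 → v = 0 := by
    intro v hv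
    by_contra hv0
    have hvz : (v : Fin n → F) ≠ 0 := fun h => hv0 (Subtype.ext h)
    obtain ⟨i, hri⟩ := exists_rightmostIdx hvz
    have : i ∈ fSet (c k.succ) := ⟨v, v.2, hri⟩
    rw [fSet_c_succ hstep hc] at this
    obtain ⟨l, hlk, rfl⟩ := this
    have hl' : emb ⟨l.1, Nat.lt_succ_iff.mpr hlk⟩ = l := by
      simp [hemb]
    have := congrFun hv ⟨l.1, Nat.lt_succ_iff.mpr hlk⟩
    rw [hψ] at this
    simp only [LinearMap.pi_apply, LinearMap.comp_apply, LinearMap.proj_apply,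
      Submodule.coe_subtype, Pi.zero_apply, hl'] at this
    exact hri.1 this
  have hinj : Function.Injective ψ := by
    rw [← LinearMap.ker_eq_bot]
    exact (Submodule.eq_bot_iff _).mpr fun v hv => hker v hv
  have hsurj : Function.Surjective ψ := by
    refine (LinearMap.injective_iff_surjective_of_finrank_eq_finrank ?_).mp hinj
    rw [finrank_c hstep hc, Fin.val_succ, Module.finrank_fin_fun]
  obtain ⟨v, hv⟩ := hsurj (fun m => if (m : ℕ) = (k : ℕ) then 1 else 0)
  have hval : ∀ m : Fin ((k : ℕ) + 1),
      (v : Fin n → F) (σ (emb m)) = if (m : ℕ) = (k : ℕ) then 1 else 0 := by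
    intro m
    have := congrFun hv m
    simpa [hψ] using this
  have hvk : (v : Fin n → F) (σ k) = 1 := by
    have := hval (Fin.last _)
    simpa [hemb, Fin.ext_iff] using this
  have hvl : ∀ l, l < k → (v : Fin n → F) (σ l) = 0 := by
    intro l hlk
    have := hval ⟨l.1, by omega⟩
    have hne : (l : ℕ) ≠ (k : ℕ) := by omega
    simpa [hemb, Fin.ext_iff, hne] using this
  refine ⟨v, v.2, hvk, ?_, hvl⟩
  have hvne : (v : Fin n → F) ≠ 0 := fun h => by simp [h] at hvk
  obtain ⟨i, hri⟩ := exists_rightmostIdx hvne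
  have : i ∈ fSet (c k.succ) := ⟨v, v.2, hri⟩
  rw [fSet_c_succ hstep hc] at this
  obtain ⟨l, hlk, rfl⟩ := this
  rcases lt_or_eq_of_le (Set.mem_Iic.mp hlk) with hlt | rfl
  · exact absurd (hvl l hlt) hri.1
  · exact hri.2

end Surj

section Count
variable {F : Type*} [Field F] {n : ℕ} (σ : Equiv.Perm (Fin n))

def invSet : Finset (Fin n × Fin n) :=
  Finset.univ.filter (fun p : Fin n × Fin n => p.1 < p.2 ∧ σ p.2 < σ p.1)

def mkMat (g : Fin n × Fin n → F) : Fin n → Fin n → F := fun k j =>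
  if σ.symm j = k then 1
  else if k < σ.symm j ∧ j < σ k then g (k, σ.symm j) else 0

lemma mkMat_good (g : Fin n × Fin n → F) : GoodMat σ (mkMat σ g) := by
  refine ⟨fun k => ?_, fun k j hj => ?_, fun l k hlk => ?_⟩
  · simp [mkMat]
  · rw [mkMat, if_neg, if_neg]
    · rintro ⟨-, h2⟩; exact absurd (h2.trans hj) (lt_irrefl _)
    · rintro rfl; simp at hj
  · rw [mkMat, if_neg, if_neg]
    · rintro ⟨h1, -⟩; simp only [Equiv.symm_apply_apply] at h1
      exact absurd (hlk.trans h1) (lt_irrefl _)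
    · simp only [Equiv.symm_apply_apply]
      exact fun h => absurd (h ▸ hlk) (lt_irrefl _)

def matEquiv : {M : Fin n → Fin n → F // GoodMat σ M} ≃ ({p // p ∈ invSet σ} → F) where
  toFun M p := M.1 p.1.1 (σ p.1.2)
  invFun g := ⟨mkMat σ (fun q => if hq : q ∈ invSet σ then g ⟨q, hq⟩ else 0),
    mkMat_good σ _⟩
  left_inv M := by
    obtain ⟨M, hM⟩ := M
    refine Subtype.ext (funext fun k => funext fun j => ?_)
    simp only [mkMat]
    split_ifs with h1 h2 h3
    · have hj : j = σ k := by rw [← h1, Equiv.apply_symm_apply]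
      rw [hj]
      exact (hM.1 k).symm
    · rw [Equiv.apply_symm_apply]
    · refine absurd ?_ h3
      simp only [invSet, Finset.mem_filter, Finset.mem_univ, true_and]
      exact ⟨h2.1, by simpa using h2.2⟩
    · rcases lt_trichotomy (σ.symm j) k with hlt | heq | hgt
      · rw [← Equiv.apply_symm_apply σ j]
        exact (hM.2.2 _ _ hlt).symm
      · exact absurd heq h1
      · have hj : σ k < j := by
          rcases lt_trichotomy (σ k) j with h | h | h
          · exact h
          · exact absurd (by rw [← h, Equiv.symm_apply_apply]) h1
          · exact absurd ⟨hgt, h⟩ h2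
        exact (hM.2.1 _ _ hj).symm
  right_inv g := by
    funext p
    obtain ⟨⟨a, b⟩, hp⟩ := p
    have hab : a < b ∧ σ b < σ a := by
      simpa [invSet] using hp
    simp only [mkMat, Equiv.symm_apply_apply]
    rw [if_neg (fun h => absurd h (ne_of_gt hab.1)), if_pos hab, dif_pos hp]

end Count

/-- the number of maximal chains of `B_n(q)` whose label sequence is
`σ(1), ..., σ(n)` equals `q^{inv σ}`. -/
theorem card_chains_with_label (F : Type*) [Field F] [Fintype F] (n : ℕ)
    (σ : Equiv.Perm (Fin n)) :
    Nat.card {c : Fin (n + 1) → Submodule F (Fin n → F) //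
        c 0 = ⊥ ∧ c (Fin.last n) = ⊤ ∧
        ∀ i : Fin n, c i.castSucc < c i.succ ∧
          Module.finrank F (c i.succ) = Module.finrank F (c i.castSucc) + 1 ∧
          σ i ∈ fSet (c i.succ) ∧ σ i ∉ fSet (c i.castSucc)} =
      Fintype.card F ^ inversions σ := by
  classical
  let Φ : {M : Fin n → Fin n → F // GoodMat σ M} →
      {c : Fin (n + 1) → Submodule F (Fin n → F) //
        c 0 = ⊥ ∧ c (Fin.last n) = ⊤ ∧
        ∀ i : Fin n, c i.castSucc < c i.succ ∧
          Module.finrank F (c i.succ) = Module.finrank F (c i.castSucc) + 1 ∧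
          σ i ∈ fSet (c i.succ) ∧ σ i ∉ fSet (c i.castSucc)} :=
    fun M => ⟨cOf M.1, cOf_chain M.2⟩
  have hbij : Function.Bijective Φ := by
    constructor
    · intro M M' h
      exact Subtype.ext (cOf_injective M.2 M'.2 (congrArg Subtype.val h))
    · rintro ⟨c, hc0, hcl, hstep⟩
      choose v hv1 hv2 hv3 hv4 using exists_row hstep hc0
      have hgood : GoodMat σ v := ⟨hv2, hv3, fun l k hlk => hv4 k l hlk⟩
      refine ⟨⟨v, hgood⟩, Subtype.ext (funext fun k => ?_)⟩
      refine Submodule.eq_of_le_of_finrank_le ?_ ?_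
      · simp only [Φ, cOf]
        rw [Submodule.span_le]
        rintro _ ⟨l, hl, rfl⟩
        exact c_mono hstep (show l.succ ≤ k from hl) (hv1 l)
      · rw [finrank_c hstep hc0, finrank_cOf hgood]
  rw [Nat.card_congr (Equiv.ofBijective Φ hbij).symm,
    Nat.card_congr (matEquiv σ), Nat.card_eq_fintype_card, Fintype.card_fun,
    Fintype.card_coe]
  rfl
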